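/- Let (b_N), (d_N), (b'_N), (d'_N) be non-decreasing sequences of positive integers with b_N·d_N = b'_N·d'_N = M_N for all N, where M_N → ∞, and let ϑ ∈ {−1, 1}. Then lim_{N→∞} (1/M_N²) · #{ (i,j) ∈ [M_N]² : Γ_{b_N,d_N}^{(ϑ)}(i,j) = Γ_{b'_N,d'_N}^{(ϑ)}(i,j) } = 0 if and only if lim_{N→∞} lcm(b_N, b'_N)/min(b_N, b'_N) = ∞ and lim_{N→∞} lcm(d_N, d'_N)/min(d_N, d'_N) = ∞. -/

import Mathlib

open Filter

/-- The partial transpose `Γ_{b,d}^{(ϑ)} : [N]² → [N]²` for `N = b·d`, as an entry permutation.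
Identifying `[N] ≃ [b] × [d]` via `i = a₁·d + a₂` (`0`-based), the right partial transpose
(`θ = true`, i.e. `ϑ = 1`) swaps `a₂` and `a₋₂`, while the left partial transpose (`θ = false`,
i.e. `ϑ = -1`) swaps `a₁` and `a₋₁`. -/
def pt {b d M : ℕ} (θ : Bool) (h : b * d = M) :
    Fin M × Fin M → Fin M × Fin M := fun x =>
  let e : Fin M ≃ Fin b × Fin d := (finCongr h).symm.trans finProdFinEquiv.symm
  let u := e x.1
  let v := e x.2
  if θ then (e.symm (u.1, v.2), e.symm (v.1, u.2))
  else (e.symm (v.1, u.2), e.symm (u.1, v.2))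

namespace Stmt7Aux

open Finset

/-- difference of residues -/
def hfun (d d' x : ℕ) : ℤ := (x % d : ℕ) - ((x % d' : ℕ) : ℤ)

lemma key (d d' i j : ℕ) :
    (j % d + d * (i / d) = j % d' + d' * (i / d')) ↔
      hfun d d' i = hfun d d' j := by
  have e1 : d * (i / d) + i % d = i := Nat.div_add_mod i _
  have e2 : d' * (i / d') + i % d' = i := Nat.div_add_mod i _
  unfold hfun
  generalize d * (i / d) = A at *
  generalize d' * (i / d') = A' at *
  omega

lemma pt_eq_iff {b d b' d' M : ℕ} (θ : Bool) (h1 : b * d = M) (h2 : b' * d' = M)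
    (x : Fin M × Fin M) :
    pt θ h1 x = pt θ h2 x ↔ hfun d d' x.1.val = hfun d d' x.2.val := by
  have hv : pt θ h1 x = pt θ h2 x ↔
      ((pt θ h1 x).1.val = (pt θ h2 x).1.val ∧ (pt θ h1 x).2.val = (pt θ h2 x).2.val) := by
    rw [Prod.ext_iff, Fin.ext_iff, Fin.ext_iff]
  rw [hv]
  cases θ <;>
    simp only [pt, Equiv.trans_apply, Equiv.symm_trans_apply, Equiv.symm_symm,
      finCongr_apply, finCongr_symm, if_true, if_false, Bool.false_eq_true] <;>
    simp only [finProdFinEquiv_symm_apply, finProdFinEquiv_apply_val, Fin.coe_divNat,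
      Fin.coe_modNat, Fin.coe_cast, Fin.val_mk] <;>
  · rw [key d d' x.1.val x.2.val, key d d' x.2.val x.1.val]
    unfold hfun; constructor <;> intro h <;> omega

def fib (M d d' : ℕ) (c : ℤ) : ℕ :=
  ((univ : Finset (Fin M)).filter fun y => hfun d d' y.val = c).card

def Tset (M d d' : ℕ) : Finset ℤ := (univ : Finset (Fin M)).image fun y => hfun d d' y.val

lemma count_eq (M d d' : ℕ) :
    ((univ : Finset (Fin M × Fin M)).filter fun x => hfun d d' x.1.val = hfun d d' x.2.val).card
      = ∑ c ∈ Tset M d d', (fib M d d' c) ^ 2 := by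
  rw [Finset.card_eq_sum_card_fiberwise
    (f := fun x : Fin M × Fin M => hfun d d' x.1.val) (t := Tset M d d')
    (fun x hx => Finset.mem_image_of_mem _ (Finset.mem_univ x.1))]
  refine Finset.sum_congr rfl fun c _ => ?_
  have : (((univ : Finset (Fin M × Fin M)).filter
        fun x => hfun d d' x.1.val = hfun d d' x.2.val).filter
        fun x => hfun d d' x.1.val = c)
      = ((univ : Finset (Fin M)).filter fun y => hfun d d' y.val = c) ×ˢ
        ((univ : Finset (Fin M)).filter fun y => hfun d d' y.val = c) := by
    ext ⟨a, b⟩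
    simp only [Finset.mem_filter, Finset.mem_univ, true_and, Finset.mem_product]
    constructor
    · rintro ⟨h1, h2⟩; exact ⟨h2, h2 ▸ h1.symm⟩
    · rintro ⟨h1, h2⟩; exact ⟨h1.trans h2.symm, h1⟩
  rw [this, Finset.card_product, sq, fib]

lemma sum_fib (M d d' : ℕ) : ∑ c ∈ Tset M d d', fib M d d' c = M := by
  have := Finset.card_eq_sum_card_fiberwise
    (f := fun y : Fin M => hfun d d' y.val) (t := Tset M d d')
    (s := univ) (fun x _ => Finset.mem_image_of_mem _ (Finset.mem_univ x))
  simpa [fib] using this.symm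

lemma mods_eq {d d' : ℕ} {y y' : ℕ} (h : hfun d d' y = hfun d d' y')
    (h2 : y % min d d' = y' % min d d') : y % d = y' % d ∧ y % d' = y' % d' := by
  unfold hfun at h
  rcases le_total d d' with hle | hle
  · rw [min_eq_left hle] at h2; omega
  · rw [min_eq_right hle] at h2; omega

lemma fib_le (M d d' : ℕ) (hd : 0 < d) (hd' : 0 < d') (hL : Nat.lcm d d' ∣ M) (c : ℤ) :
    fib M d d' c ≤ M / Nat.lcm d d' * min d d' := by
  classical
  set L := Nat.lcm d d' with hLdef
  have hL0 : 0 < L := Nat.pos_of_ne_zero (Nat.lcm_ne_zero hd.ne' hd'.ne')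
  have hm0 : 0 < min d d' := lt_min hd hd'
  have := Finset.card_le_card_of_injOn
    (s := (univ : Finset (Fin M)).filter fun y => hfun d d' y.val = c)
    (f := fun y : Fin M => (y.val / L, y.val % min d d'))
    (t := Finset.range (M / L) ×ˢ Finset.range (min d d'))
    (fun y hy => by
      simp only [Finset.mem_coe, Finset.mem_product, Finset.mem_range]
      exact ⟨Nat.div_lt_div_of_lt_of_dvd hL y.isLt, Nat.mod_lt _ hm0⟩)
    (fun y hy y' hy' hee => by
      simp only [Finset.mem_coe, Finset.mem_filter] at hy hy'
      have h1 : y.val / L = y'.val / L := congrArg Prod.fst hee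
      have h2 : y.val % min d d' = y'.val % min d d' := congrArg Prod.snd hee
      obtain ⟨e1, e2⟩ := mods_eq (hy.2.trans hy'.2.symm) h2
      have hmodL : y.val % L = y'.val % L := Nat.mod_lcm e1 e2
      have : y.val = y'.val := by
        calc y.val = L * (y.val / L) + y.val % L := (Nat.div_add_mod _ _).symm
          _ = L * (y'.val / L) + y'.val % L := by rw [h1, hmodL]
          _ = y'.val := Nat.div_add_mod _ _
      exact Fin.ext this)
  simpa [fib] using this

lemma Tcard (M d d' : ℕ) (hd : 0 < d) (hd' : 0 < d') :
    (Tset M d d').card * min d d' ≤ 2 * Nat.lcm d d' := by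
  classical
  set g := Nat.gcd d d' with hg
  have hg0 : 0 < g := Nat.gcd_pos_of_pos_left _ hd
  obtain ⟨p, hp⟩ : g ∣ d := Nat.gcd_dvd_left d d'
  obtain ⟨q, hq⟩ : g ∣ d' := Nat.gcd_dvd_right d d'
  have hp0 : 0 < p := by nlinarith
  have hq0 : 0 < q := by nlinarith
  have hlcm : Nat.lcm d d' = g * p * q := by
    have h1 : g * Nat.lcm d d' = g * (g * p * q) := by
      have h2 := Nat.gcd_mul_lcm d d'
      rw [← hg] at h2
      rw [h2, hp, hq]; ring
    exact Nat.eq_of_mul_eq_mul_left hg0 h1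
  have hsub : Tset M d d' ⊆ (Finset.Ioo (-(q:ℤ)) (p:ℤ)).image fun t => (g:ℤ) * t := by
    intro c hc
    obtain ⟨y, -, rfl⟩ := Finset.mem_image.mp hc
    set x := y.val
    have e1 : (d:ℤ) * ((x / d : ℕ) : ℤ) + ((x % d : ℕ) : ℤ) = (x : ℤ) := by
      exact_mod_cast Nat.div_add_mod x d
    have e2 : (d':ℤ) * ((x / d' : ℕ) : ℤ) + ((x % d' : ℕ) : ℤ) = (x : ℤ) := by
      exact_mod_cast Nat.div_add_mod x d'
    have hdvd : (g:ℤ) ∣ hfun d d' x := by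
      have heq : hfun d d' x = (d':ℤ) * ((x / d' : ℕ) : ℤ) - (d:ℤ) * ((x / d : ℕ) : ℤ) := by
        unfold hfun; linarith
      rw [heq]
      exact dvd_sub ((Int.natCast_dvd_natCast.mpr ⟨q, hq⟩).mul_right _)
        ((Int.natCast_dvd_natCast.mpr ⟨p, hp⟩).mul_right _)
    obtain ⟨t, ht⟩ := hdvd
    have hub : hfun d d' x < (d:ℤ) := by
      unfold hfun
      have := Int.ofNat_lt.mpr (Nat.mod_lt x hd)
      have h0 : (0:ℤ) ≤ ((x % d' : ℕ) : ℤ) := Int.natCast_nonneg _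
      omega
    have hlb : -(d':ℤ) < hfun d d' x := by
      unfold hfun
      have := Int.ofNat_lt.mpr (Nat.mod_lt x hd')
      have h0 : (0:ℤ) ≤ ((x % d : ℕ) : ℤ) := Int.natCast_nonneg _
      omega
    refine Finset.mem_image.mpr ⟨t, Finset.mem_Ioo.mpr ⟨?_, ?_⟩, ht.symm⟩
    · have : -((g:ℤ) * q) < (g:ℤ) * t := by
        rw [← ht]; calc -((g:ℤ)*q) = -(d':ℤ) := by rw [hq]; push_cast; ring
          _ < _ := hlb
      nlinarith [this, Int.natCast_pos.mpr hg0]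
    · have : (g:ℤ) * t < (g:ℤ) * p := by
        rw [← ht]; calc hfun d d' x < (d:ℤ) := hub
          _ = (g:ℤ)*p := by rw [hp]; push_cast; ring
      exact lt_of_mul_lt_mul_left this (by positivity)
  have hcard : (Tset M d d').card ≤ p + q - 1 := by
    calc (Tset M d d').card ≤ ((Finset.Ioo (-(q:ℤ)) (p:ℤ)).image fun t => (g:ℤ) * t).card :=
          Finset.card_le_card hsub
      _ ≤ (Finset.Ioo (-(q:ℤ)) (p:ℤ)).card := Finset.card_image_le
      _ = p + q - 1 := by rw [Int.card_Ioo]; omega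
  calc (Tset M d d').card * min d d' ≤ (p + q - 1) * min d d' :=
        Nat.mul_le_mul_right _ hcard
    _ ≤ 2 * Nat.lcm d d' := by
        rw [hlcm, hp, hq]
        rcases le_total p q with h | h
        · rw [min_eq_left (Nat.mul_le_mul_left g h)]
          have h2 : p + q - 1 ≤ 2 * q := by omega
          calc (p + q - 1) * (g * p) ≤ 2 * q * (g * p) := Nat.mul_le_mul_right _ h2
            _ = 2 * (g * p * q) := by ring
        · rw [min_eq_right (Nat.mul_le_mul_left g h)]
          have h2 : p + q - 1 ≤ 2 * p := by omega
          calc (p + q - 1) * (g * q) ≤ 2 * p * (g * q) := Nat.mul_le_mul_right _ h2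
            _ = 2 * (g * p * q) := by ring

lemma nat_id {b d b' d' M : ℕ} (hb : 0 < b) (hd : 0 < d) (hb' : 0 < b') (hd' : 0 < d')
    (h1 : b * d = M) (h2 : b' * d' = M) :
    Nat.lcm b b' * min d d' = Nat.lcm d d' * min b b' := by
  have hgb : 0 < Nat.gcd b b' := Nat.gcd_pos_of_pos_left _ hb
  have hgd : 0 < Nat.gcd d d' := Nat.gcd_pos_of_pos_left _ hd
  have h3 := Nat.gcd_mul_lcm b b'
  have h4 := Nat.gcd_mul_lcm d d'
  have id1 : b * Nat.gcd d d' = d' * Nat.gcd b b' := by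
    rw [← Nat.gcd_mul_left, ← Nat.gcd_mul_left, h1, mul_comm d' b, mul_comm d' b', h2]
    exact Nat.gcd_comm _ _
  have id2 : b' * Nat.gcd d d' = d * Nat.gcd b b' := by
    rw [← Nat.gcd_mul_left, ← Nat.gcd_mul_left, h2, mul_comm d b, h1, mul_comm d b']
    exact Nat.gcd_comm _ _
  rcases le_total d d' with h | h
  · have hbb : b' ≤ b := by
      have : b' * d' ≤ b * d' := by rw [h2, ← h1]; exact Nat.mul_le_mul_left b h
      exact Nat.le_of_mul_le_mul_right this hd'
    rw [min_eq_left h, min_eq_right hbb]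
    refine Nat.eq_of_mul_eq_mul_left (Nat.mul_pos hgb hgd) ?_
    calc (Nat.gcd b b' * Nat.gcd d d') * (Nat.lcm b b' * d)
        = (Nat.gcd b b' * Nat.lcm b b') * (Nat.gcd d d' * d) := by ring
      _ = (b * b') * (Nat.gcd d d' * d) := by rw [h3]
      _ = (b' * d) * (b * Nat.gcd d d') := by ring
      _ = (b' * d) * (d' * Nat.gcd b b') := by rw [id1]
      _ = Nat.gcd b b' * ((Nat.gcd d d' * Nat.lcm d d') * b') := by rw [h4]; ring
      _ = (Nat.gcd b b' * Nat.gcd d d') * (Nat.lcm d d' * b') := by ring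
  · have hbb : b ≤ b' := by
      have : b * d ≤ b' * d := by rw [h1, ← h2]; exact Nat.mul_le_mul_left b' h
      exact Nat.le_of_mul_le_mul_right this hd
    rw [min_eq_right h, min_eq_left hbb]
    refine Nat.eq_of_mul_eq_mul_left (Nat.mul_pos hgb hgd) ?_
    calc (Nat.gcd b b' * Nat.gcd d d') * (Nat.lcm b b' * d')
        = (Nat.gcd b b' * Nat.lcm b b') * (Nat.gcd d d' * d') := by ring
      _ = (b * b') * (Nat.gcd d d' * d') := by rw [h3]
      _ = (b * d') * (b' * Nat.gcd d d') := by ring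
      _ = (b * d') * (d * Nat.gcd b b') := by rw [id2]
      _ = Nat.gcd b b' * ((Nat.gcd d d' * Nat.lcm d d') * b) := by rw [h4]; ring
      _ = (Nat.gcd b b' * Nat.gcd d d') * (Nat.lcm d d' * b) := by ring

lemma sandwich {b d b' d' M : ℕ} (hb : 0 < b) (hd : 0 < d) (hb' : 0 < b') (hd' : 0 < d')
    (h1 : b * d = M) (h2 : b' * d' = M) (θ : Bool) :
    (((univ : Finset (Fin M × Fin M)).filter fun x =>
        pt θ h1 x = pt θ h2 x).card * Nat.lcm d d' ≤ M ^ 2 * min d d')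
    ∧ (M ^ 2 * min d d' ≤ 2 * Nat.lcm d d' *
        ((univ : Finset (Fin M × Fin M)).filter fun x => pt θ h1 x = pt θ h2 x).card) := by
  classical
  have hL : Nat.lcm d d' ∣ M :=
    Nat.lcm_dvd ⟨b, by rw [← h1]; ring⟩ ⟨b', by rw [← h2]; ring⟩
  have hL0 : 0 < Nat.lcm d d' := Nat.pos_of_ne_zero (Nat.lcm_ne_zero hd.ne' hd'.ne')
  have hcnt : ((univ : Finset (Fin M × Fin M)).filter fun x => pt θ h1 x = pt θ h2 x).card
      = ∑ c ∈ Tset M d d', (fib M d d' c) ^ 2 := by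
    rw [← count_eq]
    congr 1
    apply Finset.filter_congr
    intro x _
    simpa using pt_eq_iff θ h1 h2 x
  constructor
  · rw [hcnt]
    calc (∑ c ∈ Tset M d d', (fib M d d' c) ^ 2) * Nat.lcm d d'
        ≤ (∑ c ∈ Tset M d d', (M / Nat.lcm d d' * min d d') * fib M d d' c) * Nat.lcm d d' := by
          refine Nat.mul_le_mul_right _ (Finset.sum_le_sum fun c _ => ?_)
          rw [sq]
          exact Nat.mul_le_mul_right _ (fib_le M d d' hd hd' hL c)
      _ = (M / Nat.lcm d d' * Nat.lcm d d') * (min d d' * M) := by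
          rw [← Finset.mul_sum, sum_fib]; ring
      _ = M ^ 2 * min d d' := by rw [Nat.div_mul_cancel hL]; ring
  · rw [hcnt]
    have hcs : (∑ c ∈ Tset M d d', fib M d d' c) ^ 2
        ≤ (Tset M d d').card * ∑ c ∈ Tset M d d', (fib M d d' c) ^ 2 :=
      sq_sum_le_card_mul_sum_sq
    rw [sum_fib] at hcs
    calc M ^ 2 * min d d'
        ≤ ((Tset M d d').card * ∑ c ∈ Tset M d d', (fib M d d' c) ^ 2) * min d d' :=
          Nat.mul_le_mul_right _ hcs
      _ = ((Tset M d d').card * min d d') * ∑ c ∈ Tset M d d', (fib M d d' c) ^ 2 := by ring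
      _ ≤ (2 * Nat.lcm d d') * ∑ c ∈ Tset M d d', (fib M d d' c) ^ 2 :=
          Nat.mul_le_mul_right _ (Tcard M d d' hd hd')

end Stmt7Aux

/-- for non-decreasing sequences of positive integers with
`b_N·d_N = b'_N·d'_N = M_N → ∞` and a common `ϑ ∈ {−1,1}` (encoded by `θ : Bool`),
`(1/M_N²)·#{(i,j) : Γ_{b_N,d_N}^{(ϑ)}(i,j) = Γ_{b'_N,d'_N}^{(ϑ)}(i,j)} → 0` iff
`lcm(b_N,b'_N)/min(b_N,b'_N) → ∞` and `lcm(d_N,d'_N)/min(d_N,d'_N) → ∞`. -/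
theorem stmt_7 (b d b' d' M : ℕ → ℕ)
    (hbm : Monotone b) (hdm : Monotone d) (hb'm : Monotone b') (hd'm : Monotone d')
    (hb : ∀ n, 0 < b n) (hd : ∀ n, 0 < d n) (hb' : ∀ n, 0 < b' n) (hd' : ∀ n, 0 < d' n)
    (hM : ∀ n, b n * d n = M n) (hM' : ∀ n, b' n * d' n = M n)
    (hMtop : Tendsto M atTop atTop) (θ : Bool) :
    Tendsto
      (fun n => ((Finset.univ.filter fun x : Fin (M n) × Fin (M n) =>
          pt θ (hM n) x = pt θ (hM' n) x).card : ℝ) / (M n : ℝ) ^ 2)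
      atTop (nhds 0)
    ↔ (Tendsto (fun n => (Nat.lcm (b n) (b' n) : ℝ) / (min (b n) (b' n) : ℝ)) atTop atTop
      ∧ Tendsto (fun n => (Nat.lcm (d n) (d' n) : ℝ) / (min (d n) (d' n) : ℝ)) atTop atTop) := by
  classical
  set R : ℕ → ℝ := fun n => ((Finset.univ.filter fun x : Fin (M n) × Fin (M n) =>
      pt θ (hM n) x = pt θ (hM' n) x).card : ℝ) / (M n : ℝ) ^ 2 with hR
  set F : ℕ → ℝ := fun n => (Nat.lcm (d n) (d' n) : ℝ) / (min (d n) (d' n) : ℝ) with hF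
  have hMpos : ∀ n, 0 < M n := fun n => (hM n) ▸ Nat.mul_pos (hb n) (hd n)
  have hLpos : ∀ n, 0 < Nat.lcm (d n) (d' n) := fun n =>
    Nat.pos_of_ne_zero (Nat.lcm_ne_zero (hd n).ne' (hd' n).ne')
  have hmpos : ∀ n, 0 < min (d n) (d' n) := fun n => lt_min (hd n) (hd' n)
  have hF1 : ∀ n, 1 ≤ F n := by
    intro n
    rw [hF]
    have hmono : min (d n) (d' n) ≤ Nat.lcm (d n) (d' n) :=
      le_trans (min_le_left _ _) (Nat.le_of_dvd (hLpos n) (Nat.dvd_lcm_left _ _))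
    exact (one_le_div (by exact_mod_cast hmpos n)).mpr (by exact_mod_cast hmono)
  have hFpos : ∀ n, 0 < F n := fun n => lt_of_lt_of_le one_pos (hF1 n)
  -- sandwich, in ℝ
  have hsw := fun n => Stmt7Aux.sandwich (hb n) (hd n) (hb' n) (hd' n) (hM n) (hM' n) θ
  have hub : ∀ n, R n ≤ (F n)⁻¹ := by
    intro n
    have h := (hsw n).1
    have hM2 : (0:ℝ) < (M n : ℝ) ^ 2 := by
      have := hMpos n; positivity
    have hLr : (0:ℝ) < ((Nat.lcm (d n) (d' n) : ℕ) : ℝ) := by exact_mod_cast hLpos n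
    simp only [hR, hF]
    rw [← Nat.cast_min, inv_div, div_le_div_iff₀ hM2 hLr]
    have h' := (Nat.cast_le (α := ℝ)).mpr h
    push_cast at h' ⊢
    linarith
  have hlb : ∀ n, (2 * F n)⁻¹ ≤ R n := by
    intro n
    have h := (hsw n).2
    have hM2 : (0:ℝ) < (M n : ℝ) ^ 2 := by
      have := hMpos n; positivity
    have hLr : (0:ℝ) < 2 * ((Nat.lcm (d n) (d' n) : ℕ) : ℝ) := by
      have : (0:ℝ) < ((Nat.lcm (d n) (d' n) : ℕ) : ℝ) := by exact_mod_cast hLpos n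
      linarith
    simp only [hR, hF]
    rw [← Nat.cast_min, mul_div_assoc', inv_div, div_le_div_iff₀ hLr hM2]
    have h' := (Nat.cast_le (α := ℝ)).mpr h
    push_cast at h' ⊢
    linarith
  have hRnonneg : ∀ n, 0 ≤ R n := fun n => by rw [hR]; positivity
  have hmain : Tendsto R atTop (nhds 0) ↔ Tendsto F atTop atTop := by
    constructor
    · intro hRlim
      have h0 : Tendsto (fun n => (2 * F n)⁻¹) atTop (nhds 0) :=
        squeeze_zero (fun n => by positivity) hlb hRlim
      have h1 : Tendsto (fun n => (2 * F n)⁻¹) atTop (nhdsWithin 0 (Set.Ioi 0)) := by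
        refine tendsto_nhdsWithin_iff.mpr ⟨h0, Eventually.of_forall fun n => ?_⟩
        have := hFpos n
        simp only [Set.mem_Ioi]
        positivity
      have h2 : Tendsto (fun n => 2 * F n) atTop atTop := by
        have h' := h1.inv_tendsto_nhdsGT_zero
        refine h'.congr fun n => ?_
        simp
      have h3 : Tendsto (fun n => (2 * F n) / 2) atTop atTop := h2.atTop_div_const two_pos
      refine h3.congr fun n => ?_
      ring
    · intro hFlim
      refine squeeze_zero hRnonneg hub ?_
      exact hFlim.inv_tendsto_atTop
  rw [hmain]
  constructor
  · intro hFl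
    constructor
    · refine hFl.congr fun n => ?_
      rw [hF]
      push_cast
      have e1 : (0:ℝ) < min ((b n) : ℝ) ((b' n) : ℝ) :=
        lt_min (by exact_mod_cast hb n) (by exact_mod_cast hb' n)
      have e2 : (0:ℝ) < min ((d n) : ℝ) ((d' n) : ℝ) :=
        lt_min (by exact_mod_cast hd n) (by exact_mod_cast hd' n)
      rw [div_eq_div_iff e2.ne' e1.ne']
      rw [← Nat.cast_min, ← Nat.cast_min]
      exact_mod_cast (Stmt7Aux.nat_id (hb n) (hd n) (hb' n) (hd' n) (hM n) (hM' n)).symm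
    · refine hFl.congr fun n => ?_
      rw [hF]
  · rintro ⟨-, h2⟩
    refine h2.congr fun n => ?_
    rw [hF]
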